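/- For any 1 ≤ m ≤ n, the shifted spine heights satisfy 0 ≤ π(𝕊_{m−1}ⁿ) − π(𝕊ₘⁿ) ≤ π(𝒫_{m−1}); in particular m ↦ π(𝕊ₘⁿ) is non-increasing, with decrements bounded by the maximal atom of the stick being removed. -/

import Mathlib

open scoped Classical NNReal
noncomputable section

/-- Finite point measures on `(0,∞)`, modeled as multisets of atoms in `ℝ≥0`. -/
abbrev PtM := Multiset ℝ≥0

/-- A stick: a life-length together with a finite point measure of birth times. -/
abbrev Stick := ℝ≥0 × PtM

/-- The space of doubly infinite sequences of sticks. -/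
abbrev Om := ℤ → Stick

/-- The shift operator `θ_n`. -/
def theta (n : ℤ) (ω : Om) : Om := fun k => ω (n + k)

/-- The dual (time-reversal) operator `ϑ^n`. -/
def dual (n : ℤ) (ω : Om) : Om := fun k => ω (n - k - 1)

/-- Life length of the `k`-th individual. -/
def Vc (ω : Om) (k : ℤ) : ℝ≥0 := (ω k).1

/-- Point measure (ages at childbearing) of the `k`-th individual. -/
def Pc (ω : Om) (k : ℤ) : PtM := (ω k).2

/-- The Lukasiewicz path `S`. -/
def Sw (ω : Om) (n : ℤ) : ℤ :=
  if 0 ≤ n then ∑ k ∈ Finset.range n.toNat, ((Multiset.card (Pc ω (k : ℤ)) : ℤ) - 1)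
  else - ∑ k ∈ Finset.range (-n).toNat, ((Multiset.card (Pc ω (-(k : ℤ) - 1)) : ℤ) - 1)

/-- `π(ν)`: the supremum of the support (largest atom) of a finite point measure. -/
def piM (ν : PtM) : ℝ≥0 := ν.sup

/-- `Υ_j(ν)`: removes the `j` largest atoms of `ν`. -/
def upsilon (j : ℕ) (ν : PtM) : PtM :=
  ((ν.sort (· ≤ ·)).take (Multiset.card ν - j) : List ℝ≥0)

/-- The map `Φ` driving the spine process dynamics. -/
def phiSp (Y : List PtM) (ν : PtM) : List PtM :=
  if ν = 0 then
    match Y.reverse.dropWhile (fun m => decide (Multiset.card m < 2)) with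
    | [] => []
    | h :: t => (upsilon 1 h :: t).reverse
  else Y ++ [ν]

/-- The spine process `𝕊₀ⁿ`. -/
def spine (ω : Om) : ℕ → List PtM
  | 0 => []
  | n + 1 => phiSp (spine ω n) (Pc ω (n : ℤ))

/-- `π` extended to finite sequences of point measures. -/
def piL (Y : List PtM) : ℝ≥0 := (Y.map piM).sum

/-- The chronological height process `ℍ(n) = π(𝕊₀ⁿ)`. -/
def Hchr (ω : Om) (n : ℕ) : ℝ≥0 := piL (spine ω n)

/-- The genealogical height process
`𝓗(n) = #{k ∈ {0,…,n−1} : S(k+1) ≤ min_{k+1 ≤ j ≤ n} S(j)}`. -/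
def genH (ω : Om) (n : ℕ) : ℕ :=
  ((Finset.range n).filter
    (fun k : ℕ => ∀ j : ℕ, j ∈ Finset.Icc (k + 1) n → Sw ω ((k : ℤ) + 1) ≤ Sw ω (j : ℤ))).card

/-- Weak ascending ladder height times `T(k)` (valued `⊤` if nonexistent). -/
def ladderT (ω : Om) : ℕ → ℕ∞
  | 0 => 0
  | k + 1 => sInf {x : ℕ∞ | ∃ m j : ℕ, x = (m : ℕ∞) ∧ ladderT ω k = (j : ℕ∞) ∧
      j < m ∧ Sw ω (j : ℤ) ≤ Sw ω (m : ℤ)}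

/-- `T^{-1}(n) = min{k ≥ 0 : T(k) ≥ n}`. -/
def Tinv (ω : Om) (n : ℕ) : ℕ := sInf {k : ℕ | (n : ℕ∞) ≤ ladderT ω k}

/-- `T̃^{-1}(n) = max{k ≥ 0 : T(k) ≤ n}`. -/
def tildeTinv (ω : Om) (n : ℕ) : ℕ := sSup {k : ℕ | ladderT ω k ≤ (n : ℕ∞)}

/-- First passage time upward `τ_ℓ = inf{k > 0 : S(k) ≥ ℓ}`. -/
def tauUp (ω : Om) (ℓ : ℤ) : ℕ∞ :=
  sInf {x : ℕ∞ | ∃ k : ℕ, x = (k : ℕ∞) ∧ 0 < k ∧ ℓ ≤ Sw ω (k : ℤ)}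

/-- First hitting time downward `τ⁻_ℓ = inf{k ≥ 0 : S(k) = −ℓ}`. -/
def tauDown (ω : Om) (ℓ : ℤ) : ℕ∞ :=
  sInf {x : ℕ∞ | ∃ k : ℕ, x = (k : ℕ∞) ∧ Sw ω (k : ℤ) = -ℓ}

/-- `τ_ℓ` as a natural number (junk value `0` when infinite). -/
def tauUpN (ω : Om) (ℓ : ℤ) : ℕ := (tauUp ω ℓ).toNat

/-- The undershoot `ζ_ℓ = ℓ − S(τ_ℓ − 1)`. -/
def zetaU (ω : Om) (ℓ : ℤ) : ℤ := ℓ - Sw ω ((tauUpN ω ℓ : ℤ) - 1)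

/-- `μ_ℓ = Υ_{ζ_ℓ}(𝒫_{τ_ℓ − 1})`. -/
def muU (ω : Om) (ℓ : ℤ) : PtM := upsilon (zetaU ω ℓ).toNat (Pc ω ((tauUpN ω ℓ : ℤ) - 1))

/-- `𝒬(k) = μ₀ ∘ θ_{T(k−1)}`. -/
def Qcal (ω : Om) (k : ℕ) : PtM := muU (theta ((ladderT ω (k - 1)).toNat : ℤ) ω) 0

/-- `𝕐(k) = π(𝒬(k))`. -/
def Ybb (ω : Om) (k : ℕ) : ℝ≥0 := piM (Qcal ω k)

/-- The backward maximum `L(m) = max_{0 ≤ k ≤ m} S(−k)`. -/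
def Lmax (ω : Om) (m : ℕ) : ℤ :=
  Finset.sup' (Finset.range (m + 1)) Finset.nonempty_range_add_one (fun k => Sw ω (-(k : ℤ)))

/-- The ancestor set `𝒜(n) = {n − T(k)∘ϑ^n : k ≥ 0}` (only finite ladder times). -/
def Aset (ω : Om) (n : ℕ) : Set ℤ :=
  {a | ∃ k j : ℕ, ladderT (dual (n : ℤ) ω) k = (j : ℕ∞) ∧ a = (n : ℤ) - (j : ℤ)}

/-- `mrca(m,n) = max(𝒜(m) ∩ 𝒜(n))`. -/
def mrcaZ (ω : Om) (m n : ℕ) : ℤ := sSup (Aset ω m ∩ Aset ω n)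

/-- `χ(m,k) = inf{j ≥ m+1 : S(j) = S(m+1) − k}`. -/
def chiT (ω : Om) (m k : ℕ) : ℕ∞ :=
  sInf {x : ℕ∞ | ∃ j : ℕ, x = (j : ℕ∞) ∧ m + 1 ≤ j ∧
    Sw ω (j : ℤ) = Sw ω ((m : ℤ) + 1) - (k : ℤ)}

/-- `χ(m) = inf{j ≥ m+1 : S(j) = S(m) − 1}`. -/
def chiF (ω : Om) (m : ℕ) : ℕ∞ :=
  sInf {x : ℕ∞ | ∃ j : ℕ, x = (j : ℕ∞) ∧ m + 1 ≤ j ∧ Sw ω (j : ℤ) = Sw ω (m : ℤ) - 1}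

/-- The functional `D_ℓ(𝕊₀^m)` of the spine, expressed through the dual walk:
`D_ℓ = (Σ_{i : 0 < T(i) ≤ min(τ_ℓ, m)} 𝕐(i) − 1_{τ_ℓ ≤ m} π(μ_ℓ)) ∘ ϑ^m`, with `D_0 ≡ 0`. -/
def Dfun (ω : Om) (m : ℕ) (ℓ : ℤ) : ℝ :=
  if ℓ < 1 then 0 else
    (∑ i ∈ (Finset.Icc 1 m).filter
        (fun i => 0 < ladderT (dual (m : ℤ) ω) i ∧
          ladderT (dual (m : ℤ) ω) i ≤ min (tauUp (dual (m : ℤ) ω) ℓ) (m : ℕ∞)),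
      (Ybb (dual (m : ℤ) ω) i : ℝ))
    - (if tauUp (dual (m : ℤ) ω) ℓ ≤ (m : ℕ∞) then (piM (muU (dual (m : ℤ) ω) ℓ) : ℝ) else 0)

/-- `K_j = 2𝒱(j−1) − ℍ(j)`. -/
def Kt (ω : Om) (j : ℕ) : ℝ := 2 * ∑ k ∈ Finset.range j, (Vc ω (k : ℤ) : ℝ) - (Hchr ω j : ℝ)

/-- The chronological contour process: on `[K_n, K_{n+1}]` it increases at rate `+1` from
`ℍ(n)` up to `ℍ(n) + V_n` and then decreases at rate `−1` down to `ℍ(n+1)`. -/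
def contour (ω : Om) (t : ℝ) : ℝ :=
  let n := sSup {j : ℕ | Kt ω j ≤ t}
  min ((Hchr ω n : ℝ) + (t - Kt ω n)) ((Hchr ω (n + 1) : ℝ) + (Kt ω (n + 1) - t))



lemma piM_upsilon_le (j : ℕ) (ν : PtM) : piM (upsilon j ν) ≤ piM ν := by
  rw [piM, piM, Multiset.sup_le]
  intro b hb
  apply Multiset.le_sup
  have hb' : b ∈ (ν.sort (· ≤ ·)).take (Multiset.card ν - j) := by
    simpa [upsilon, Multiset.mem_coe] using hb
  have : b ∈ ν.sort (· ≤ ·) := List.mem_of_mem_take hb'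
  simpa using (Multiset.mem_sort _).mp this

lemma piL_cons (μ : PtM) (Y : List PtM) : piL (μ :: Y) = piM μ + piL Y := by
  simp [piL]

lemma spine_shift (ω : Om) : ∀ N : ℕ,
    spine ω (N + 1) = spine (theta 1 ω) N ∨
    ∃ μ : PtM, spine ω (N + 1) = μ :: spine (theta 1 ω) N ∧ piM μ ≤ piM (Pc ω 0) := by
  intro N
  induction N with
  | zero =>
    by_cases h : Pc ω 0 = 0
    · left; simp [spine, phiSp, h, List.dropWhile]
    · right; exact ⟨Pc ω 0, by simp [spine, phiSp, h], le_refl _⟩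
  | succ N ih =>
    have hPc : Pc (theta 1 ω) (N : ℤ) = Pc ω ((N + 1 : ℕ) : ℤ) := by
      simp [Pc, theta]
      rw [add_comm]
    have hA2 : spine ω (N + 1 + 1) = phiSp (spine ω (N + 1)) (Pc ω ((N + 1 : ℕ) : ℤ)) := by
      simp [spine]
    have hB2 : spine (theta 1 ω) (N + 1)
        = phiSp (spine (theta 1 ω) N) (Pc ω ((N + 1 : ℕ) : ℤ)) := by
      simp [spine, hPc]
    rcases ih with h | ⟨μ, hA, hμ⟩
    · left; rw [hA2, hB2, h]
    · set B := spine (theta 1 ω) N with hB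
      set ν := Pc ω ((N + 1 : ℕ) : ℤ) with hν
      by_cases h0 : ν = 0
      · rw [hA2, hB2, hA, h0]
        set p : PtM → Bool := fun m => decide (Multiset.card m < 2) with hp
        have hrev : (μ :: B).reverse = B.reverse ++ [μ] := by simp
        by_cases he : (B.reverse.dropWhile p).isEmpty = true
        · have hBe : B.reverse.dropWhile p = [] := List.isEmpty_iff.mp he
          have hAd : (μ :: B).reverse.dropWhile p = List.dropWhile p [μ] := by
            rw [hrev, List.dropWhile_append, if_pos he]
          by_cases hc : Multiset.card μ < 2
          · left
            simp only [phiSp, if_pos rfl]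
            rw [hAd, hBe]
            simp [List.dropWhile, hc, hp, (by omega : Multiset.card μ ≤ 1)]
          · right
            refine ⟨upsilon 1 μ, ?_, (piM_upsilon_le 1 μ).trans hμ⟩
            simp only [phiSp, if_pos rfl]
            rw [hAd, hBe]
            simp [List.dropWhile, hc, hp, decide_eq_false (by omega : ¬ Multiset.card μ ≤ 1)]
        · obtain ⟨h1, t1, ht⟩ : ∃ h1 t1, B.reverse.dropWhile p = h1 :: t1 := by
            cases hd : B.reverse.dropWhile p with
            | nil => exact absurd (by rw [hd]; rfl) he
            | cons a l => exact ⟨a, l, rfl⟩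
          have hAd : (μ :: B).reverse.dropWhile p = h1 :: (t1 ++ [μ]) := by
            rw [hrev, List.dropWhile_append, if_neg he, ht]
            rfl
          right
          refine ⟨μ, ?_, hμ⟩
          simp only [phiSp, if_pos rfl]
          rw [hAd, ht]
          simp
      · right
        refine ⟨μ, ?_, hμ⟩
        rw [hA2, hB2, hA]
        simp [phiSp, h0, ← hν]

theorem stmt16 (ω : Om) (m n : ℕ) (h1 : 1 ≤ m) (hmn : m ≤ n) :
    0 ≤ (piL (spine (theta ((m : ℤ) - 1) ω) (n - (m - 1))) : ℝ)
          - (piL (spine (theta (m : ℤ) ω) (n - m)) : ℝ) ∧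
    (piL (spine (theta ((m : ℤ) - 1) ω) (n - (m - 1))) : ℝ)
        - (piL (spine (theta (m : ℤ) ω) (n - m)) : ℝ)
      ≤ (piM (Pc ω ((m : ℤ) - 1)) : ℝ) := by
  obtain ⟨m', rfl⟩ : ∃ m', m = m' + 1 := ⟨m - 1, by omega⟩
  set ω' := theta ((m' : ℤ)) ω with hω'
  have hth : theta ((m' + 1 : ℕ) : ℤ) ω = theta 1 ω' := by
    funext k
    simp [theta, hω']
    ring_nf
  have hcast : ((m' + 1 : ℕ) : ℤ) - 1 = (m' : ℤ) := by push_cast; ring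
  have hsub1 : n - (m' + 1 - 1) = (n - (m' + 1)) + 1 := by omega
  have hPc0 : Pc ω' 0 = Pc ω ((m' : ℕ) : ℤ) := by
    simp [Pc, hω', theta]
  rw [hcast, hsub1, hth, ← hPc0, ← hω']
  rcases spine_shift ω' (n - (m' + 1)) with h | ⟨μ, hA, hμ⟩
  · rw [h]
    constructor
    · simp
    · simp
  · rw [hA, piL_cons]
    push_cast
    constructor
    · have := (piM μ).coe_nonneg
      linarith
    · have : (piM μ : ℝ) ≤ (piM (Pc ω' 0) : ℝ) := by exact_mod_cast hμ
      linarith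


end
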